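/- The number of labeled forests on vertex set [n] consisting of i trees such that nodes 1, 2, ..., i belong to distinct trees equals i · n^(n-i-1). -/

import Mathlib

open SimpleGraph

set_option linter.unusedSectionVars false
set_option maxHeartbeats 800000

variable {V : Type} [DecidableEq V] {G : SimpleGraph V} {s : Set V}

def liftWalk : ∀ {u v : V} (p : G.Walk u v) (_hs : ∀ x ∈ p.support, x ∈ s)
    (hu : u ∈ s) (hv : v ∈ s), (G.induce s).Walk ⟨u, hu⟩ ⟨v, hv⟩
  | _, _, SimpleGraph.Walk.nil, _, _, _ => SimpleGraph.Walk.nil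
  | u, v, SimpleGraph.Walk.cons h q, hs, hu, hv =>
    SimpleGraph.Walk.cons (by exact h) (liftWalk q (fun x hx => hs x (by simp [hx]))
      (hs _ (by simp)) hv)

lemma liftWalk_map {u v : V} (p : G.Walk u v) (hs : ∀ x ∈ p.support, x ∈ s)
    (hu : u ∈ s) (hv : v ∈ s) :
    (liftWalk p hs hu hv).map (Embedding.induce s).toHom = p := by
  induction p with
  | nil => rfl
  | cons h q ih =>
    exact congrArg (Walk.cons h) (ih _ _ _)

lemma reachable_induce_of_walk {u v : V} (p : G.Walk u v) (hs : ∀ x ∈ p.support, x ∈ s)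
    (hu : u ∈ s) (hv : v ∈ s) : (G.induce s).Reachable ⟨u, hu⟩ ⟨v, hv⟩ :=
  ⟨liftWalk p hs hu hv⟩

lemma reachable_of_induce {u v : s} (h : (G.induce s).Reachable u v) :
    G.Reachable u.1 v.1 := by
  obtain ⟨p⟩ := h
  exact ⟨(p.map (Embedding.induce s).toHom)⟩

lemma induce_isAcyclic (hG : G.IsAcyclic) : (G.induce s).IsAcyclic := by
  intro v c hc
  exact hG (c.map (Embedding.induce s).toHom)
    (hc.map (by exact Subtype.val_injective))

def IsRF (G : SimpleGraph V) (R : Finset V) : Prop :=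
  G.IsAcyclic ∧ ∀ v : V, ∃! r : V, r ∈ R ∧ G.Reachable r v

def sOf (r : V) : Set V := {v | v ≠ r}

section Ext

variable {r : V} {G' : SimpleGraph ↥(sOf r)} {S Q : Finset ↥(sOf r)}




def extG (r : V) (G' : SimpleGraph ↥(sOf r)) (S : Finset ↥(sOf r)) : SimpleGraph V where
  Adj x y := (∃ (hx : x ≠ r) (hy : y ≠ r), G'.Adj ⟨x,hx⟩ ⟨y,hy⟩) ∨
    (x = r ∧ ∃ hy : y ≠ r, (⟨y,hy⟩ : ↥(sOf r)) ∈ S) ∨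
    (y = r ∧ ∃ hx : x ≠ r, (⟨x,hx⟩ : ↥(sOf r)) ∈ S)
  symm := by
    constructor
    rintro x y (⟨hx, hy, h⟩ | ⟨rfl, hy, h⟩ | ⟨rfl, hx, h⟩)
    · exact Or.inl ⟨hy, hx, h.symm⟩
    · exact Or.inr (Or.inr ⟨rfl, hy, h⟩)
    · exact Or.inr (Or.inl ⟨rfl, hx, h⟩)
  loopless := by
    constructor
    rintro x (⟨hx, hy, h⟩ | ⟨rfl, hy, h⟩ | ⟨rfl, hx, h⟩)
    · exact G'.irrefl h
    · exact hy rfl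
    · exact hx rfl

lemma extG_adj_r {r : V} {G' : SimpleGraph ↥(sOf r)} {S : Finset ↥(sOf r)} {y : V} :
    (extG r G' S).Adj r y ↔ ∃ hy : y ≠ r, (⟨y,hy⟩ : ↥(sOf r)) ∈ S := by
  constructor
  · rintro (⟨hx, hy, h⟩ | ⟨-, hy, h⟩ | ⟨rfl, hx, h⟩)
    · exact absurd rfl hx
    · exact ⟨hy, h⟩
    · exact absurd rfl hx
  · rintro ⟨hy, h⟩
    exact Or.inr (Or.inl ⟨rfl, hy, h⟩)

lemma extG_adj_ne {r : V} {G' : SimpleGraph ↥(sOf r)} {S : Finset ↥(sOf r)} {x y : V}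
    (hx : x ≠ r) (hy : y ≠ r) :
    (extG r G' S).Adj x y ↔ G'.Adj ⟨x,hx⟩ ⟨y,hy⟩ := by
  constructor
  · rintro (⟨hx', hy', h⟩ | ⟨rfl, hy', h⟩ | ⟨rfl, hx', h⟩)
    · exact h
    · exact absurd rfl hx
    · exact absurd rfl hy
  · intro h
    exact Or.inl ⟨hx, hy, h⟩

lemma induce_extG {r : V} {G' : SimpleGraph ↥(sOf r)} {S : Finset ↥(sOf r)} :
    (extG r G' S).induce (sOf r) = G' := by
  ext ⟨a, ha⟩ ⟨b, hb⟩
  simpa [comap_adj] using extG_adj_ne (G' := G') (S := S) ha hb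

lemma extG_induce {r : V} {G : SimpleGraph V} {S : Finset ↥(sOf r)}
    (hS : ∀ y : ↥(sOf r), y ∈ S ↔ G.Adj r ↑y) :
    extG r (G.induce (sOf r)) S = G := by
  ext x y
  constructor
  · rintro (⟨hx, hy, h⟩ | ⟨rfl, hy, h⟩ | ⟨rfl, hx, h⟩)
    · exact h
    · exact (hS _).mp h
    · exact ((hS _).mp h).symm
  · intro h
    by_cases hx : x = r
    · subst hx
      exact Or.inr (Or.inl ⟨rfl, (G.ne_of_adj h).symm, (hS _).mpr h⟩)
    · by_cases hy : y = r
      · subst hy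
        exact Or.inr (Or.inr ⟨rfl, hx, (hS _).mpr h.symm⟩)
      · exact Or.inl ⟨hx, hy, h⟩

lemma ext_reach_r (hG'a : G'.IsAcyclic)
    (x : V) (hx : x ≠ r) (h : (extG r G' S).Reachable r x) :
    ∃ s' ∈ S, G'.Reachable s' ⟨x, hx⟩ := by
  obtain ⟨w⟩ := h
  obtain ⟨y, hadj, q, hq⟩ := Walk.exists_eq_cons_of_ne (Ne.symm hx) w.toPath.val
  have hpath : w.toPath.val.IsPath := w.toPath.2
  rw [hq] at hpath
  have hy : y ≠ r := fun hyr => (extG r G' S).irrefl (hyr ▸ hadj)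
  obtain ⟨hy', hyS⟩ := extG_adj_r.mp hadj
  have hrq : r ∉ q.support := by
    have := hpath.support_nodup
    rw [Walk.support_cons] at this
    exact (List.nodup_cons.mp this).1
  have hreach : ((extG r G' S).induce (sOf r)).Reachable ⟨y, hy⟩ ⟨x, hx⟩ :=
    reachable_induce_of_walk q (fun z hz => by
      intro hzr; exact hrq (by rwa [hzr] at hz)) hy hx
  rw [induce_extG] at hreach
  exact ⟨⟨y, hy⟩, hyS, hreach⟩

lemma ext_not_reach_root_r (hG'a : G'.IsAcyclic)
    (hroot : ∀ v, ∃! ρ, ρ ∈ Q ∧ G'.Reachable ρ v) (hSQ : S ⊆ Q)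
    (ρ : ↥(sOf r)) (hρ : ρ ∈ Q) (hρS : ρ ∉ S) :
    ¬ (extG r G' S).Reachable ↑ρ r := by
  intro h
  obtain ⟨s', hs'S, hs'r⟩ := ext_reach_r hG'a ρ.1 ρ.2 h.symm
  have hu := hroot ρ
  have : s' = ρ := hu.unique ⟨hSQ hs'S, by simpa using hs'r⟩ ⟨hρ, Reachable.refl _⟩
  exact hρS (this ▸ hs'S)

lemma ext_reach_ne (hG'a : G'.IsAcyclic)
    (hroot : ∀ v, ∃! ρ, ρ ∈ Q ∧ G'.Reachable ρ v) (hSQ : S ⊆ Q)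
    (ρ : ↥(sOf r)) (hρ : ρ ∈ Q) (hρS : ρ ∉ S) (x : V) (hx : x ≠ r)
    (h : (extG r G' S).Reachable ↑ρ x) : G'.Reachable ρ ⟨x, hx⟩ := by
  obtain ⟨w⟩ := h
  by_cases hr : r ∈ w.support
  · exact absurd ⟨w.takeUntil r hr⟩
      (ext_not_reach_root_r hG'a hroot hSQ ρ hρ hρS)
  · have hreach : ((extG r G' S).induce (sOf r)).Reachable ⟨↑ρ, ρ.2⟩ ⟨x, hx⟩ :=
      reachable_induce_of_walk w (fun z hz => by
        intro hzr; exact hr (by rwa [hzr] at hz)) ρ.2 hx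
    rw [induce_extG] at hreach
    simpa using hreach

lemma ext_acyclic (hG'a : G'.IsAcyclic)
    (hroot : ∀ v, ∃! ρ, ρ ∈ Q ∧ G'.Reachable ρ v) (hSQ : S ⊆ Q) :
    (extG r G' S).IsAcyclic := by
  have hIA : ((extG r G' S).induce (sOf r)).IsAcyclic := by
    rw [induce_extG]; exact hG'a
  intro v c hc
  by_cases hr : r ∈ c.support
  · have hd : (c.rotate r hr).IsCycle := hc.rotate hr
    generalize c.rotate r hr = d at hd
    cases d with
    | nil => exact hd.ne_nil rfl
    | cons hadj q =>
      rw [Walk.cons_isCycle_iff] at hd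
      obtain ⟨hq, he⟩ := hd
      rename_i y
      have hy : y ≠ r := hadj.ne'
      obtain ⟨hy', hyS⟩ := extG_adj_r.mp hadj
      obtain ⟨z, hadj₂, q₂, heq⟩ := Walk.exists_eq_cons_of_ne hadj.ne q.reverse
      have hz : z ≠ r := hadj₂.ne'
      obtain ⟨hz', hzS⟩ := extG_adj_r.mp hadj₂
      have hqrev : q.reverse.IsPath := hq.reverse
      rw [heq] at hqrev
      have hrq₂ : r ∉ q₂.support := by
        have := hqrev.support_nodup
        rw [Walk.support_cons] at this
        exact (List.nodup_cons.mp this).1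
      have hzy : z ≠ y := by
        rintro rfl
        apply he
        have : s(r, z) ∈ q.reverse.edges := by rw [heq]; simp
        rwa [Walk.edges_reverse, List.mem_reverse] at this
      have hreach : ((extG r G' S).induce (sOf r)).Reachable ⟨z, hz⟩ ⟨y, hy⟩ :=
        reachable_induce_of_walk q₂ (fun x hx => by
          intro hxr; exact hrq₂ (by rwa [hxr] at hx)) hz hy
      rw [induce_extG] at hreach
      exact hzy (by
        simpa [Subtype.ext_iff] using
          (hroot ⟨y, hy⟩).unique ⟨hSQ hzS, hreach⟩ ⟨hSQ hyS, Reachable.refl _⟩)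
  · have hv : v ≠ r := fun h => hr (h ▸ c.start_mem_support)
    have hs : ∀ x ∈ c.support, x ∈ sOf r := fun x hx hxr => hr (hxr ▸ hx)
    have hlc : (liftWalk c hs hv hv).IsCycle := by
      have := liftWalk_map c hs hv hv
      rw [← Walk.map_isCycle_iff_of_injective (f := (Embedding.induce (sOf r)).toHom)
        (by exact Subtype.val_injective), this]
      exact hc
    exact hIA _ hlc

lemma ext_reach_of_G' {a b : ↥(sOf r)} (h : G'.Reachable a b) :
    (extG r G' S).Reachable ↑a ↑b := by
  have h2 : ((extG r G' S).induce (sOf r)).Reachable a b := by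
    rw [induce_extG]; exact h
  exact reachable_of_induce h2

lemma ext_root (hG'a : G'.IsAcyclic)
    (hroot : ∀ v, ∃! ρ, ρ ∈ Q ∧ G'.Reachable ρ v) (hSQ : S ⊆ Q)
    {R : Finset V} (hrR : r ∈ R)
    (hRQ : ∀ ρ : ↥(sOf r), (ρ ∈ Q ∧ ρ ∉ S) ↔ ↑ρ ∈ R) :
    ∀ v : V, ∃! ρ, ρ ∈ R ∧ (extG r G' S).Reachable ρ v := by
  intro v
  by_cases hv : v = r
  · refine ⟨r, ⟨hrR, by rw [hv]⟩, ?_⟩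
    rintro ρ' ⟨hρ'R, hreach⟩
    rw [hv] at hreach
    by_contra hne
    exact ext_not_reach_root_r hG'a hroot hSQ ⟨ρ', hne⟩
      (((hRQ ⟨ρ', hne⟩).mpr hρ'R).1) (((hRQ ⟨ρ', hne⟩).mpr hρ'R).2) hreach
  · obtain ⟨ρ₀, ⟨hρ₀Q, hρ₀reach⟩, huniq⟩ := hroot ⟨v, hv⟩
    by_cases hρ₀S : ρ₀ ∈ S
    · refine ⟨r, ⟨hrR, ?_⟩, ?_⟩
      · exact (Adj.reachable (extG_adj_r.mpr ⟨ρ₀.2, by simpa using hρ₀S⟩)).trans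
          (ext_reach_of_G' hρ₀reach)
      · rintro ρ' ⟨hρ'R, hreach⟩
        by_contra hne
        have hG'reach := ext_reach_ne hG'a hroot hSQ ⟨ρ', hne⟩
          (((hRQ ⟨ρ', hne⟩).mpr hρ'R).1) (((hRQ ⟨ρ', hne⟩).mpr hρ'R).2) v hv hreach
        have := huniq ⟨ρ', hne⟩ ⟨((hRQ ⟨ρ', hne⟩).mpr hρ'R).1, hG'reach⟩
        exact ((hRQ ⟨ρ', hne⟩).mpr hρ'R).2 (this ▸ hρ₀S)
    · refine ⟨↑ρ₀, ⟨(hRQ ρ₀).mp ⟨hρ₀Q, hρ₀S⟩, ext_reach_of_G' hρ₀reach⟩, ?_⟩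
      rintro ρ' ⟨hρ'R, hreach⟩
      by_cases hne : ρ' = r
      · rw [hne] at hreach ⊢
        obtain ⟨s', hs'S, hs'reach⟩ := ext_reach_r hG'a v hv hreach
        exact absurd ((huniq s' ⟨hSQ hs'S, hs'reach⟩) ▸ hs'S) hρ₀S
      · have hG'reach := ext_reach_ne hG'a hroot hSQ ⟨ρ', hne⟩
          (((hRQ ⟨ρ', hne⟩).mpr hρ'R).1) (((hRQ ⟨ρ', hne⟩).mpr hρ'R).2) v hv hreach
        have := huniq ⟨ρ', hne⟩ ⟨((hRQ ⟨ρ', hne⟩).mpr hρ'R).1, hG'reach⟩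
        exact congrArg Subtype.val this

end Ext

section Forward

variable {r : V} {G : SimpleGraph V} {R : Finset V}
  {S R' : Finset ↥(sOf r)}

lemma two_nbrs_eq (hGa : G.IsAcyclic) {a b : V} (h₁ : G.Adj r a) (h₂ : G.Adj r b)
    (p : G.Walk a b) (hp : r ∉ p.support) : a = b := by
  have hP : p.bypass.IsPath := p.bypass_isPath
  have hrP : r ∉ p.bypass.support := fun h => hp (p.support_bypass_subset h)
  have := hGa.path_unique (Path.singleton h₂)
    ⟨Walk.cons h₁ p.bypass, (Walk.cons_isPath_iff _ _).2 ⟨hP, hrP⟩⟩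
  have hlen := congrArg (fun q : G.Path r b => q.val.length) this
  simp [Path.singleton] at hlen
  exact hlen.eq

lemma reach_decomp {x : V} (hx : x ≠ r) (h : G.Reachable r x) :
    ∃ (y : V) (hy : y ≠ r), G.Adj r y ∧ (G.induce (sOf r)).Reachable ⟨y, hy⟩ ⟨x, hx⟩ := by
  obtain ⟨w⟩ := h
  obtain ⟨y, hadj, q, hq⟩ := Walk.exists_eq_cons_of_ne (Ne.symm hx) w.toPath.val
  have hpath : w.toPath.val.IsPath := w.toPath.2
  rw [hq] at hpath
  have hy : y ≠ r := hadj.ne'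
  have hrq : r ∉ q.support := by
    have := hpath.support_nodup
    rw [Walk.support_cons] at this
    exact (List.nodup_cons.mp this).1
  have hsupp : ∀ z ∈ q.support, z ∈ sOf r := by
    intro z hz
    simp only [sOf, Set.mem_setOf_eq]
    rintro rfl
    exact hrq hz
  exact ⟨y, hy, hadj, reachable_induce_of_walk q hsupp hy hx⟩

lemma forward_reach_lift (hG : IsRF G R) (hrR : r ∈ R) {ρ x : V} (hρ : ρ ∈ R)
    (hρr : ρ ≠ r) (hx : x ≠ r) (h : G.Reachable ρ x) :
    (G.induce (sOf r)).Reachable ⟨ρ, hρr⟩ ⟨x, hx⟩ := by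
  obtain ⟨w⟩ := h
  by_cases hr : r ∈ w.support
  · have hreachr : G.Reachable ρ r := ⟨w.takeUntil r hr⟩
    exact absurd ((hG.2 r).unique ⟨hρ, hreachr⟩ ⟨hrR, Reachable.refl _⟩) hρr
  · have hsupp : ∀ z ∈ w.support, z ∈ sOf r := by
      intro z hz
      simp only [sOf, Set.mem_setOf_eq]
      rintro rfl
      exact hr hz
    exact reachable_induce_of_walk w hsupp hρr hx

lemma induce_isRF (hG : IsRF G R) (hrR : r ∈ R)
    (hS : ∀ y : ↥(sOf r), y ∈ S ↔ G.Adj r ↑y)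
    (hR' : ∀ ρ : ↥(sOf r), ρ ∈ R' ↔ ↑ρ ∈ R) :
    IsRF (G.induce (sOf r)) (R' ∪ S) := by
  refine ⟨induce_isAcyclic hG.1, ?_⟩
  intro v
  obtain ⟨ρ₀, ⟨hρ₀R, hρ₀reach⟩, huniq⟩ := hG.2 ↑v
  by_cases hρ₀r : ρ₀ = r
  · rw [hρ₀r] at hρ₀reach
    obtain ⟨y, hy, hadj, hreach⟩ := reach_decomp v.2 hρ₀reach
    refine ⟨⟨y, hy⟩, ⟨Finset.mem_union_right _ ((hS _).mpr hadj), hreach⟩, ?_⟩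
    rintro ρ' ⟨hρ', hreach'⟩
    by_cases hρ'S : ρ' ∈ S
    · have h12 : (G.induce (sOf r)).Reachable ρ' ⟨y, hy⟩ := hreach'.trans hreach.symm
      obtain ⟨q⟩ := h12
      have hrq : r ∉ (q.map (Embedding.induce (sOf r)).toHom).support := by
        rw [Walk.support_map]
        rintro hmem
        obtain ⟨z, -, hz⟩ := List.mem_map.mp hmem
        exact z.2 hz
      exact Subtype.ext (two_nbrs_eq hG.1 ((hS ρ').mp hρ'S) hadj _ hrq)
    · have hρ'R : (ρ' : V) ∈ R := (hR' ρ').mp (by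
        rcases Finset.mem_union.mp hρ' with h | h
        · exact h
        · exact absurd h hρ'S)
      have := huniq ↑ρ' ⟨hρ'R, reachable_of_induce hreach'⟩
      exact absurd (this.trans hρ₀r) ρ'.2
  · refine ⟨⟨ρ₀, hρ₀r⟩, ⟨Finset.mem_union_left _ ((hR' _).mpr hρ₀R),
      forward_reach_lift hG hrR hρ₀R hρ₀r v.2 hρ₀reach⟩, ?_⟩
    rintro ρ' ⟨hρ', hreach'⟩
    by_cases hρ'S : ρ' ∈ S
    · have : G.Reachable r ↑v :=
        ((hS ρ').mp hρ'S).reachable.trans (reachable_of_induce hreach')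
      exact absurd (huniq r ⟨hrR, this⟩).symm hρ₀r
    · have hρ'R : (ρ' : V) ∈ R := (hR' ρ').mp (by
        rcases Finset.mem_union.mp hρ' with h | h
        · exact h
        · exact absurd h hρ'S)
      exact Subtype.ext (huniq ↑ρ' ⟨hρ'R, reachable_of_induce hreach'⟩)

lemma S_disjoint_R' (hG : IsRF G R) (hrR : r ∈ R)
    (hS : ∀ y : ↥(sOf r), y ∈ S ↔ G.Adj r ↑y)
    (hR' : ∀ ρ : ↥(sOf r), ρ ∈ R' ↔ ↑ρ ∈ R) :
    Disjoint S R' := by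
  rw [Finset.disjoint_left]
  intro ρ hρS hρR'
  have hadj := (hS ρ).mp hρS
  have := (hG.2 ↑ρ).unique ⟨hrR, hadj.reachable⟩ ⟨(hR' ρ).mp hρR', Reachable.refl _⟩
  exact ρ.2 this.symm

lemma ext_isRF {G' : SimpleGraph ↥(sOf r)} (hG' : IsRF G' (R' ∪ S))
    (hdisj : Disjoint S R') (hrR : r ∈ R)
    (hR' : ∀ ρ : ↥(sOf r), ρ ∈ R' ↔ ↑ρ ∈ R) :
    IsRF (extG r G' S) R := by
  refine ⟨ext_acyclic hG'.1 hG'.2 Finset.subset_union_right, ?_⟩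
  refine ext_root hG'.1 hG'.2 Finset.subset_union_right hrR ?_
  intro ρ
  constructor
  · rintro ⟨hρQ, hρS⟩
    rcases Finset.mem_union.mp hρQ with h | h
    · exact (hR' ρ).mp h
    · exact absurd h hρS
  · intro hρR
    have hρR' := (hR' ρ).mpr hρR
    exact ⟨Finset.mem_union_left _ hρR', Finset.disjoint_right.mp hdisj hρR'⟩

end Forward

open Finset in
lemma binom_sum (m i' : ℕ) (hm : 1 ≤ m) :
    ∑ j ∈ Finset.range (m+1), (m.choose j : ℚ) * ((i' : ℚ) + j) * ((m + i' : ℚ)) ^ ((m : ℤ) - j - 1)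
      = ((i' : ℚ) + 1) * ((m + i' : ℚ) + 1) ^ ((m : ℤ) - 1) := by
  set x : ℚ := (m + i' : ℚ) with hxdef
  have hx : x ≠ 0 := by
    have : (1:ℚ) ≤ (m:ℚ) := by exact_mod_cast hm
    positivity
  apply mul_right_cancel₀ hx
  have hzp : ∀ j ∈ Finset.range (m+1), (m.choose j : ℚ) * ((i' : ℚ) + j) * x ^ ((m : ℤ) - j - 1) * x
      = (m.choose j : ℚ) * ((i' : ℚ) + j) * x ^ (m - j) := by
    intro j hj
    rw [Finset.mem_range] at hj
    have hjm : j ≤ m := by omega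
    rw [mul_assoc, ← zpow_add_one₀ hx]
    have : (m : ℤ) - j - 1 + 1 = ((m - j : ℕ) : ℤ) := by push_cast [hjm]; ring
    rw [this, zpow_natCast]
  rw [Finset.sum_mul, Finset.sum_congr rfl hzp]
  -- split the sum
  have hsplit : ∀ j ∈ Finset.range (m+1), (m.choose j : ℚ) * ((i' : ℚ) + j) * x ^ (m - j)
      = (i' : ℚ) * ((m.choose j : ℚ) * x ^ (m - j)) + ((j : ℚ) * (m.choose j : ℚ) * x ^ (m - j)) := by
    intro j hj; ring
  rw [Finset.sum_congr rfl hsplit, Finset.sum_add_distrib, ← Finset.mul_sum]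
  have hbin : ∑ j ∈ Finset.range (m+1), (m.choose j : ℚ) * x ^ (m - j) = (x + 1) ^ m := by
    have h := add_pow (1:ℚ) x m
    simp only [one_pow, one_mul] at h
    rw [show (x+1)^m = (1+x)^m by ring, h]
    exact Finset.sum_congr rfl (fun j _ => mul_comm _ _)
  have hbin2 : ∑ j ∈ Finset.range (m+1), (j : ℚ) * (m.choose j : ℚ) * x ^ (m - j)
      = (m : ℚ) * (x + 1) ^ (m - 1) := by
    rw [Finset.sum_range_succ'] -- ∑_{j} f j = ∑_{k<m} f (k+1) + f 0
    simp only [Nat.cast_zero, zero_mul, add_zero]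
    have hterm : ∀ k ∈ Finset.range m, ((k+1 : ℕ) : ℚ) * (m.choose (k+1) : ℚ) * x ^ (m - (k+1))
        = (m : ℚ) * (((m-1).choose k : ℚ) * x ^ ((m-1) - k)) := by
      intro k hk
      rw [Finset.mem_range] at hk
      have hid : (k+1) * m.choose (k+1) = m * (m-1).choose k := by
        cases m with
        | zero => omega
        | succ m' =>
          have h := Nat.add_one_mul_choose_eq m' k
          simp only [Nat.succ_eq_add_one, Nat.add_sub_cancel]
          rw [mul_comm]
          exact h.symm
      have hexp : m - (k+1) = (m-1) - k := by omega
      rw [hexp]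
      have : ((k+1 : ℕ) : ℚ) * (m.choose (k+1) : ℚ) = (m : ℚ) * ((m-1).choose k : ℚ) := by
        exact_mod_cast congrArg (fun n : ℕ => (n : ℚ)) hid
      push_cast at this ⊢
      linear_combination x ^ ((m-1) - k) * this
    rw [Finset.sum_congr rfl hterm, ← Finset.mul_sum]
    congr 1
    have h := add_pow (1:ℚ) x (m-1)
    simp only [one_pow, one_mul] at h
    rw [show (x+1)^(m-1) = (1+x)^(m-1) by ring, h]
    exact Finset.sum_congr (by rw [Nat.sub_add_cancel hm]) (fun j _ => mul_comm _ _)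
  rw [hbin, hbin2]
  -- RHS
  have hmz : (m : ℤ) - 1 = ((m - 1 : ℕ) : ℤ) := by
    have := Nat.cast_sub (R := ℤ) hm
    simpa using this.symm
  rw [hmz, zpow_natCast]
  have hx1 : x + 1 = (x + 1) := rfl
  -- (i' * (x+1)^m + m (x+1)^{m-1}) = (i'+1)(x+1)^{m-1} x
  have hfac : (x+1)^m = (x+1)^(m-1) * (x+1) := by
    rw [← pow_succ]
    congr 1
    omega
  rw [hfac]
  have key : (i' : ℚ) * (x + 1) + (m : ℚ) = ((i' : ℚ) + 1) * x := by
    rw [hxdef]; push_cast; ring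
  linear_combination ((x+1)^(m-1)) * key

section Count

lemma nat_card_sigma {α : Type} [Fintype α] (β : α → Type) [∀ a, Finite (β a)] :
    Nat.card ((a : α) × β a) = ∑ a : α, Nat.card (β a) := by
  letI : ∀ a, Fintype (β a) := fun a => Fintype.ofFinite _
  classical
  simp [Nat.card_eq_fintype_card, Fintype.card_sigma]

lemma rf_card : ∀ (N : ℕ) (V : Type) [Fintype V] [DecidableEq V], Fintype.card V = N → 1 ≤ N →
    ∀ R : Finset V, (Nat.card {G : SimpleGraph V // IsRF G R} : ℚ)
      = (R.card : ℚ) * (N : ℚ) ^ ((N : ℤ) - (R.card : ℤ) - 1) := by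
  intro N
  induction N using Nat.strong_induction_on with
  | _ N IH =>
  intro V _ _ hcard hN R
  classical
  by_cases hR0 : R = ∅
  · subst hR0
    haveI hne : Nonempty V := Fintype.card_pos_iff.mp (by omega)
    haveI : IsEmpty {G : SimpleGraph V // IsRF G (∅ : Finset V)} := by
      refine ⟨fun ⟨G, hG⟩ => ?_⟩
      obtain ⟨ρ, ⟨hρ, -⟩, -⟩ := hG.2 (Classical.arbitrary V)
      simp at hρ
    rw [Nat.card_of_isEmpty]
    simp
  by_cases hRu : R = Finset.univ
  · have hbot : IsRF (⊥ : SimpleGraph V) R := by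
      refine ⟨isAcyclic_bot, fun v => ⟨v, ⟨by simp [hRu], Reachable.refl _⟩, ?_⟩⟩
      rintro ρ ⟨-, hρ⟩
      exact reachable_bot.mp hρ
    have huniqG : ∀ G : SimpleGraph V, IsRF G R → G = ⊥ := by
      intro G hG
      ext a b
      simp only [bot_adj, iff_false]
      intro hab
      exact hab.ne ((hG.2 b).unique ⟨by simp [hRu], hab.reachable⟩
        ⟨by simp [hRu], Reachable.refl _⟩)
    haveI : Unique {G : SimpleGraph V // IsRF G R} :=
      { default := ⟨⊥, hbot⟩, uniq := fun ⟨G, hG⟩ => Subtype.ext (huniqG G hG) }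
    have hcardR : R.card = N := by rw [hRu, Finset.card_univ, hcard]
    have hNQ : (N : ℚ) ≠ 0 := Nat.cast_ne_zero.mpr (by omega)
    have he : (N : ℤ) - (N : ℤ) - 1 = -1 := by ring
    rw [Nat.card_unique, hcardR, he, zpow_neg_one, Nat.cast_one, mul_inv_cancel₀ hNQ]
  · -- main inductive case
    obtain ⟨r, hrR⟩ := Finset.nonempty_iff_ne_empty.mpr hR0
    obtain ⟨v₀, hv₀⟩ : ∃ v, v ∉ R := by
      by_contra h
      push_neg at h
      exact hRu (Finset.eq_univ_iff_forall.mpr h)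
    have hN2 : 2 ≤ N := by
      have hrv : r ≠ v₀ := fun h => hv₀ (h ▸ hrR)
      have : 1 < Fintype.card V := Fintype.one_lt_card_iff_nontrivial.mpr ⟨⟨r, v₀, hrv⟩⟩
      omega
    letI : DecidablePred (· ∈ sOf r) := fun v => decidable_of_iff (v ≠ r) Iff.rfl
    have hcV' : Fintype.card ↥(sOf r) = N - 1 := by
      rw [Fintype.card_subtype]
      have he : Finset.univ.filter (· ∈ sOf r) = Finset.univ.erase r := by
        ext v
        rw [Finset.mem_filter, Finset.mem_erase]
        simp [sOf]
      rw [he, Finset.card_erase_of_mem (Finset.mem_univ r), Finset.card_univ, hcard]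
    set R' : Finset ↥(sOf r) := R.subtype (· ∈ sOf r) with hR'def
    have hR'mem : ∀ ρ : ↥(sOf r), ρ ∈ R' ↔ ↑ρ ∈ R := fun ρ => by
      simp [hR'def]
    have hcR' : R'.card = R.card - 1 := by
      rw [hR'def, Finset.card_subtype]
      have he : R.filter (· ∈ sOf r) = R.erase r := by
        ext v
        rw [Finset.mem_filter, Finset.mem_erase]
        simp [sOf, and_comm]
      rw [he, Finset.card_erase_of_mem hrR]
    -- bijection with pairs (S, G')
    have hEquiv : Nat.card {G : SimpleGraph V // IsRF G R}
        = Nat.card ((S : Finset ↥(sOf r)) ×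
            {G' : SimpleGraph ↥(sOf r) // IsRF G' (R' ∪ S) ∧ Disjoint S R'}) := by
      apply Nat.card_congr
      exact {
        toFun := fun GG =>
          ⟨Finset.univ.filter (fun v : ↥(sOf r) => GG.1.Adj r ↑v),
           ⟨GG.1.induce (sOf r),
            induce_isRF GG.2 hrR (fun y => by simp) hR'mem,
            S_disjoint_R' GG.2 hrR (fun y => by simp) hR'mem⟩⟩
        invFun := fun SG => ⟨extG r SG.2.1 SG.1, ext_isRF SG.2.2.1 SG.2.2.2 hrR hR'mem⟩
        left_inv := fun GG => Subtype.ext (extG_induce (fun y => by simp))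
        right_inv := fun SG => by
          obtain ⟨S, G'sub⟩ := SG
          obtain ⟨G', hG', hdisj⟩ := G'sub
          have hS₁ : (Finset.univ.filter (fun v : ↥(sOf r) => (extG r G' S).Adj r ↑v)) = S := by
            ext v
            simp only [Finset.mem_filter, Finset.mem_univ, true_and, extG_adj_r]
            constructor
            · rintro ⟨h, hv⟩
              exact hv
            · intro hv
              exact ⟨v.2, by rwa [Subtype.coe_eta]⟩
          refine Sigma.ext ?_ ?_
          · dsimp only
            exact hS₁
          · dsimp only
            rw [Subtype.heq_iff_coe_eq (fun x => by rw [hS₁])]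
            exact induce_extG
      }
    rw [hEquiv, nat_card_sigma]
    set i' := R.card - 1 with hi'
    set m := N - R.card with hm
    have hR1 : 1 ≤ R.card := Finset.card_pos.mpr ⟨r, hrR⟩
    have hRcard_lt : R.card < N := by
      have hss : R ⊂ Finset.univ := Finset.ssubset_univ_iff.mpr hRu
      have := Finset.card_lt_card hss
      rwa [Finset.card_univ, hcard] at this
    have hterm : ∀ S : Finset ↥(sOf r),
        (Nat.card {G' : SimpleGraph ↥(sOf r) // IsRF G' (R' ∪ S) ∧ Disjoint S R'} : ℚ)
          = if Disjoint S R' then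
              ((i' : ℚ) + (S.card : ℚ)) *
                (((N - 1 : ℕ)) : ℚ) ^ (((N - 1 : ℕ) : ℤ) - (i' : ℤ) - (S.card : ℤ) - 1)
            else 0 := by
      intro S
      by_cases hd : Disjoint S R'
      · rw [if_pos hd]
        have hcong : Nat.card {G' : SimpleGraph ↥(sOf r) // IsRF G' (R' ∪ S) ∧ Disjoint S R'}
            = Nat.card {G' : SimpleGraph ↥(sOf r) // IsRF G' (R' ∪ S)} :=
          Nat.card_congr (Equiv.subtypeEquivRight (fun G' => and_iff_left hd))
        rw [hcong, IH (N-1) (by omega) ↥(sOf r) hcV' (by omega) (R' ∪ S)]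
        have hcu : (R' ∪ S).card = i' + S.card := by
          rw [Finset.card_union_of_disjoint hd.symm, hcR']
        rw [hcu]
        push_cast
        congr 1
        congr 1
        omega
      · rw [if_neg hd]
        have : IsEmpty {G' : SimpleGraph ↥(sOf r) // IsRF G' (R' ∪ S) ∧ Disjoint S R'} :=
          ⟨fun G' => hd G'.2.2⟩
        rw [Nat.card_of_isEmpty]
        simp
    rw [Nat.cast_sum, Finset.sum_congr rfl (fun S _ => hterm S)]
    set T : Finset ↥(sOf r) := Finset.univ \ R' with hT
    have hdisj_iff : ∀ S : Finset ↥(sOf r), Disjoint S R' ↔ S ⊆ T := fun S => by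
      rw [hT, Finset.subset_sdiff]
      simp
    simp only [hdisj_iff]
    rw [← Finset.sum_filter]
    have hfilter : Finset.univ.filter (· ⊆ T) = T.powerset := by
      ext S
      simp [Finset.mem_powerset]
    rw [hfilter]
    have hps := Finset.sum_powerset_apply_card (f := fun j => ((i' : ℚ) + (j : ℚ)) *
      (((N - 1 : ℕ)) : ℚ) ^ (((N - 1 : ℕ) : ℤ) - (i' : ℤ) - (j : ℤ) - 1)) (x := T)
    beta_reduce at hps
    rw [hps]
    have hTcard : T.card = m := by
      rw [hT, Finset.card_sdiff_of_subset (Finset.subset_univ R'), Finset.card_univ, hcV', hcR']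
      omega
    rw [hTcard]
    have hb := binom_sum m i' (by omega : 1 ≤ m)
    have hNm : ((N - 1 : ℕ) : ℚ) = (m : ℚ) + (i' : ℚ) := by
      have : (N - 1 : ℕ) = m + i' := by omega
      rw [this]
      push_cast
      ring
    have hsum_eq : ∑ j ∈ Finset.range (m+1), m.choose j • (((i' : ℚ) + (j : ℚ)) *
        (((N - 1 : ℕ)) : ℚ) ^ (((N - 1 : ℕ) : ℤ) - (i' : ℤ) - (j : ℤ) - 1))
        = ∑ j ∈ Finset.range (m+1), (m.choose j : ℚ) * ((i' : ℚ) + (j : ℚ)) *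
          ((m + i' : ℚ)) ^ ((m : ℤ) - (j : ℤ) - 1) := by
      refine Finset.sum_congr rfl (fun j hj => ?_)
      rw [nsmul_eq_mul, hNm,
        show ((N - 1 : ℕ) : ℤ) - (i' : ℤ) - (j : ℤ) - 1 = (m : ℤ) - (j : ℤ) - 1 by omega]
      ring
    rw [hsum_eq, hb]
    have h1 : (i' : ℚ) + 1 = (R.card : ℚ) := by
      have : i' + 1 = R.card := by omega
      exact_mod_cast this
    have h2 : (m : ℚ) + (i' : ℚ) + 1 = (N : ℚ) := by
      have : m + i' + 1 = N := by omega
      exact_mod_cast this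
    have h3 : (m : ℤ) - 1 = (N : ℤ) - (R.card : ℤ) - 1 := by omega
    rw [h1, h2, h3]

end Count

section Final

lemma isRF_iff (n i : ℕ) (hi : 1 ≤ i) (hin : i ≤ n) (G : SimpleGraph (Fin n)) :
    (G.IsAcyclic ∧ Nat.card G.ConnectedComponent = i ∧
      (∀ a b : Fin n, (a : ℕ) < i → (b : ℕ) < i → G.Reachable a b → a = b))
    ↔ IsRF G (Finset.univ.filter (fun v : Fin n => (v : ℕ) < i)) := by
  set R₀ : Finset (Fin n) := Finset.univ.filter (fun v : Fin n => (v : ℕ) < i) with hR₀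
  have hmem : ∀ v : Fin n, v ∈ R₀ ↔ (v : ℕ) < i := fun v => by simp [hR₀]
  have hcardR₀ : Nat.card ↥R₀ = i := by
    rw [Nat.card_eq_fintype_card]
    have e : ↥R₀ ≃ Fin i :=
      { toFun := fun v => ⟨(v : Fin n), (hmem _).mp v.2⟩
        invFun := fun j => ⟨⟨j, lt_of_lt_of_le j.2 hin⟩, (hmem _).mpr j.2⟩
        left_inv := fun v => by
          apply Subtype.ext
          apply Fin.ext
          rfl
        right_inv := fun j => by apply Fin.ext; rfl }
    rw [Fintype.card_congr e, Fintype.card_fin]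
  constructor
  · rintro ⟨hac, hcomp, hpair⟩
    refine ⟨hac, ?_⟩
    have hbij : Function.Bijective
        (fun ρ : ↥R₀ => G.connectedComponentMk ↑ρ) := by
      rw [Nat.bijective_iff_injective_and_card]
      constructor
      · intro ρ₁ ρ₂ h
        have hre : G.Reachable ↑ρ₁ ↑ρ₂ := (SimpleGraph.ConnectedComponent.eq).mp h
        exact Subtype.ext (hpair _ _ ((hmem _).mp ρ₁.2) ((hmem _).mp ρ₂.2) hre)
      · rw [hcardR₀, hcomp]
    intro v
    obtain ⟨ρ, hρ⟩ := hbij.2 (G.connectedComponentMk v)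
    refine ⟨↑ρ, ⟨ρ.2, (SimpleGraph.ConnectedComponent.eq).mp hρ⟩, ?_⟩
    rintro ρ' ⟨hρ', hreach⟩
    exact hpair _ _ ((hmem _).mp hρ') ((hmem _).mp ρ.2)
      (hreach.trans ((SimpleGraph.ConnectedComponent.eq).mp hρ).symm)
  · rintro ⟨hac, hroot⟩
    refine ⟨hac, ?_, ?_⟩
    · have hbij : Function.Bijective
          (fun ρ : ↥R₀ => G.connectedComponentMk ↑ρ) := by
        constructor
        · intro ρ₁ ρ₂ h
          have hre : G.Reachable ↑ρ₁ ↑ρ₂ := (SimpleGraph.ConnectedComponent.eq).mp h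
          exact Subtype.ext ((hroot ↑ρ₂).unique ⟨ρ₁.2, hre⟩ ⟨ρ₂.2, SimpleGraph.Reachable.refl _⟩)
        · intro c
          obtain ⟨v, rfl⟩ := c.exists_rep
          obtain ⟨ρ, ⟨hρR, hρreach⟩, -⟩ := hroot v
          exact ⟨⟨ρ, hρR⟩, (SimpleGraph.ConnectedComponent.eq).mpr hρreach⟩
      rw [← hcardR₀]
      exact (Nat.card_congr (Equiv.ofBijective _ hbij)).symm
    · intro a b ha hb hre
      exact (hroot b).unique ⟨(hmem a).mpr ha, hre⟩ ⟨(hmem b).mpr hb, SimpleGraph.Reachable.refl _⟩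

theorem stmt_5 (n i : ℕ) (hi : 1 ≤ i) (hin : i ≤ n) :
    ({G : SimpleGraph (Fin n) | G.IsAcyclic ∧
        Nat.card G.ConnectedComponent = i ∧
        (∀ a b : Fin n, (a : ℕ) < i → (b : ℕ) < i → G.Reachable a b → a = b)}.ncard : ℚ) =
      (i : ℚ) * (n : ℚ) ^ ((n : ℤ) - (i : ℤ) - 1) := by
  set R₀ : Finset (Fin n) := Finset.univ.filter (fun v : Fin n => (v : ℕ) < i) with hR₀
  have hseteq : {G : SimpleGraph (Fin n) | G.IsAcyclic ∧
        Nat.card G.ConnectedComponent = i ∧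
        (∀ a b : Fin n, (a : ℕ) < i → (b : ℕ) < i → G.Reachable a b → a = b)}
      = {G : SimpleGraph (Fin n) | IsRF G R₀} :=
    Set.ext (fun G => isRF_iff n i hi hin G)
  rw [hseteq, ← Nat.card_coe_set_eq]
  have hcast : Nat.card ↥{G : SimpleGraph (Fin n) | IsRF G R₀}
      = Nat.card {G : SimpleGraph (Fin n) // IsRF G R₀} := rfl
  rw [hcast, rf_card n (Fin n) (Fintype.card_fin n) (le_trans hi hin) R₀]
  have hcardR₀ : R₀.card = i := by
    have h1 : R₀.card = Fintype.card {v : Fin n // (v : ℕ) < i} := by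
      rw [Fintype.card_subtype]
    rw [h1]
    have e : {v : Fin n // (v : ℕ) < i} ≃ Fin i :=
      { toFun := fun v => ⟨(v : Fin n), v.2⟩
        invFun := fun j => ⟨⟨j, lt_of_lt_of_le j.2 hin⟩, j.2⟩
        left_inv := fun v => by apply Subtype.ext; apply Fin.ext; rfl
        right_inv := fun j => by apply Fin.ext; rfl }
    rw [Fintype.card_congr e, Fintype.card_fin]
  rw [hcardR₀]

end Final
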